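/- Let X be a locally compact Hausdorff space and let T : X → M_k(ℂ) be a continuous map such that T(x) is hermitian for every x, and such that the smallest absolute value of the eigenvalues of T(x) is a proper function of x: for every R ≥ 0 the set {x ∈ X : some eigenvalue λ of T(x) satisfies |λ| ≤ R} is compact. Then for every continuous function f : ℝ → ℝ vanishing at infinity, the map x ↦ f(T(x)) (functional calculus applied pointwise) is continuous and vanishes at infinity on X, i.e. for every ε > 0 the set {x ∈ X : ‖f(T(x))‖ ≥ ε} is compact. (This is the analytic content of Proposition B.13, that the map Ψ(f)(x,e) = f(εx + c(e)) is a well-defined map into the endomorphisms vanishing at infinity, in the case of a trivial bundle.) -/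
import Mathlib


open Filter

set_option maxHeartbeats 1000000 in
set_option synthInstance.maxHeartbeats 400000 in
/-- Auxiliary: a real spectral value of an operator is bounded by its norm. -/
lemma aux_abs_le_norm_of_mem_spectrum_real {k : ℕ}
    (a : EuclideanSpace ℂ (Fin k) →L[ℂ] EuclideanSpace ℂ (Fin k)) (lam : ℝ)
    (h : lam ∈ spectrum ℝ a) : |lam| ≤ ‖a‖ := by
  rcases subsingleton_or_nontrivial
      (EuclideanSpace ℂ (Fin k) →L[ℂ] EuclideanSpace ℂ (Fin k)) with hs | hn
  · exact absurd h (by simp [spectrum.mem_iff, isUnit_of_subsingleton])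
  · simpa using spectrum.norm_le_norm_of_mem h

set_option maxHeartbeats 1000000 in
set_option synthInstance.maxHeartbeats 400000 in
/-- **Analytic content of Proposition B.13** (trivial bundle case): if
`T : X → M_k(ℂ)` is a continuous hermitian-matrix-valued map on a locally
compact Hausdorff space whose smallest eigenvalue modulus is proper, then
for every `f ∈ C₀(ℝ)` the map `x ↦ f(T(x))` is continuous and vanishes at
infinity. -/
theorem cfc_of_proper_hermitian_family_vanishes_at_infinity
    (X : Type*) [TopologicalSpace X] [LocallyCompactSpace X] [T2Space X]
    (k : ℕ) (T : X → Matrix (Fin k) (Fin k) ℂ)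
    (hTcont : Continuous T)
    (hTherm : ∀ x, (T x).IsHermitian)
    (hproper : ∀ R : ℝ, 0 ≤ R →
      IsCompact {x : X | ∃ lam ∈ spectrum ℂ (T x), ‖lam‖ ≤ R})
    (f : ℝ → ℝ) (hf : Continuous f)
    (hf0 : Tendsto f (cocompact ℝ) (nhds 0)) :
    Continuous (fun x => cfc f (Matrix.toEuclideanCLM (𝕜 := ℂ) (T x))) ∧
    ∀ ε > (0 : ℝ),
      IsCompact {x : X |
        ε ≤ ‖cfc f (Matrix.toEuclideanCLM (𝕜 := ℂ) (T x))‖} := by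
  set A : X → (EuclideanSpace ℂ (Fin k) →L[ℂ] EuclideanSpace ℂ (Fin k)) :=
    fun x => Matrix.toEuclideanCLM (𝕜 := ℂ) (T x) with hAdef
  have hAcont : Continuous A := by
    have h1 : Continuous fun m : Matrix (Fin k) (Fin k) ℂ =>
        Matrix.toEuclideanCLM (𝕜 := ℂ) m :=
      LinearMap.continuous_of_finiteDimensional
        { toFun := fun m => Matrix.toEuclideanCLM (𝕜 := ℂ) m
          map_add' := fun a b => map_add _ a b
          map_smul' := fun c m => map_smul _ c m }
    exact h1.comp hTcont
  have hAsa : ∀ x, IsSelfAdjoint (A x) := fun x => by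
    rw [IsSelfAdjoint, hAdef, ← map_star]
    exact congrArg _ (hTherm x)
  have hspec : ∀ x, spectrum ℂ (A x) = spectrum ℂ (T x) := fun x =>
    AlgEquiv.spectrum_eq (Matrix.toEuclideanCLM (𝕜 := ℂ)) (T x)
  -- Continuity of `x ↦ cfc f (A x)`.
  have hcont : Continuous fun x => cfc f (A x) := by
    rw [continuous_iff_continuousAt]
    intro x₀
    rw [ContinuousAt, Metric.tendsto_nhds]
    intro ε hε
    set M : ℝ := ‖A x₀‖ + 1 with hMdef
    obtain ⟨p, hp⟩ := exists_polynomial_near_of_continuousOn (-M) M f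
      hf.continuousOn (ε / 3) (by linarith)
    have hq : Continuous fun x => Polynomial.aeval (A x) p :=
      (Polynomial.continuous_aeval p).comp hAcont
    have hx0 : ‖A x₀‖ < M := by rw [hMdef]; linarith
    have h1 : ∀ᶠ x in nhds x₀, ‖A x‖ < M :=
      (isOpen_lt hAcont.norm continuous_const).mem_nhds hx0
    have h2 : ∀ᶠ x in nhds x₀,
        dist (Polynomial.aeval (A x) p) (Polynomial.aeval (A x₀) p) < ε / 3 :=
      Metric.tendsto_nhds.mp hq.continuousAt (ε / 3) (by linarith)
    have key : ∀ x, ‖A x‖ < M →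
        ‖cfc f (A x) - Polynomial.aeval (A x) p‖ < ε / 3 := by
      intro x hx
      have heq : cfc f (A x) - Polynomial.aeval (A x) p
          = cfc (fun t => f t - p.eval t) (A x) := by
        rw [cfc_sub f (fun t => p.eval t) (A x) hf.continuousOn
          p.continuous.continuousOn, cfc_polynomial p (A x) (hAsa x)]
      rw [heq]
      refine norm_cfc_lt (by linarith) fun t ht => ?_
      have htb : |t| ≤ ‖A x‖ := aux_abs_le_norm_of_mem_spectrum_real (A x) t ht
      have htI : t ∈ Set.Icc (-M) M := by
        constructor
        · nlinarith [abs_nonneg t, neg_abs_le t]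
        · nlinarith [le_abs_self t]
      have := hp t htI
      rw [abs_sub_comm] at this
      simpa using this
    filter_upwards [h1, h2] with x hx1 hx2
    have htri := dist_triangle4 (cfc f (A x)) (Polynomial.aeval (A x) p)
      (Polynomial.aeval (A x₀) p) (cfc f (A x₀))
    have k1 := key x hx1
    have k2 := key x₀ hx0
    rw [norm_sub_rev] at k2
    simp only [dist_eq_norm] at htri hx2 ⊢
    linarith
  refine ⟨hcont, fun ε hε => ?_⟩
  -- Vanishing at infinity.
  have hev : ∀ᶠ t in cocompact ℝ, |f t| < ε := by
    have := Metric.tendsto_nhds.mp hf0 ε hε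
    simpa [Real.dist_eq] using this
  rw [hasBasis_cocompact.eventually_iff] at hev
  obtain ⟨K, hK, hKf⟩ := hev
  obtain ⟨R, hR⟩ := hK.isBounded.subset_closedBall 0
  set R' : ℝ := max R 0 with hR'def
  have hsub : {x : X | ε ≤ ‖cfc f (A x)‖}
      ⊆ {x : X | ∃ lam ∈ spectrum ℂ (T x), ‖lam‖ ≤ R'} := by
    intro x hx
    simp only [Set.mem_setOf_eq] at hx ⊢
    by_contra hc
    push_neg at hc
    have hlt : ‖cfc f (A x)‖ < ε := by
      refine norm_cfc_lt hε fun t ht => ?_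
      have htC : algebraMap ℝ ℂ t ∈ spectrum ℂ (A x) := spectrum.algebraMap_mem ℂ ht
      rw [hspec x] at htC
      have htR : R' < ‖algebraMap ℝ ℂ t‖ := hc _ htC
      have htn : ‖algebraMap ℝ ℂ t‖ = |t| := by
        rw [show algebraMap ℝ ℂ t = (t : ℂ) from rfl, Complex.norm_real,
          Real.norm_eq_abs]
      rw [htn] at htR
      have htK : t ∉ K := by
        intro htK
        have h1 := hR htK
        rw [Metric.mem_closedBall, Real.dist_eq, sub_zero] at h1
        have h2 : |t| ≤ R' := le_trans h1 (le_max_left R 0)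
        exact absurd h2 (not_le.mpr htR)
      simpa using hKf (Set.mem_compl htK)
    exact absurd hx (not_le.mpr hlt)
  have hclosed : IsClosed {x : X | ε ≤ ‖cfc f (A x)‖} :=
    isClosed_le continuous_const hcont.norm
  exact (hproper R' (le_max_right R 0)).of_isClosed_subset hclosed hsub
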